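/- Let A = ∑_{n=0}^{L-1} √(n+1) |e_n⟩⟨e_{n+1}| (the truncated boson matrix) on ℂ^{L+1} and K = ((q−1)/(L+1)) ∑_{n=0}^{L-1} n |e_n⟩⟨e_n| + ((1+qL)/(L+1)) |e_L⟩⟨e_L|. Then A A† − q A† A = 1 − (L+1)K, i.e., the truncated boson also satisfies the truncated q-mutation relation with this choice of K. -/

import Mathlib

open Matrix

private lemma stdE_conjTranspose {N : ℕ} (i j : Fin N) :
    (Matrix.single i j (1:ℂ))ᴴ = Matrix.single j i 1 := by
  ext a b
  simp only [Matrix.conjTranspose_apply, Matrix.single, Matrix.of_apply]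
  by_cases h1 : j = a <;> by_cases h2 : i = b <;> simp [h1, h2, and_comm]

private lemma one_eq_sum_stdE {N : ℕ} :
    (1 : Matrix (Fin N) (Fin N) ℂ) = ∑ i : Fin N, Matrix.single i i 1 := by
  ext a b
  simp only [Matrix.sum_apply, Matrix.single, Matrix.one_apply, Matrix.of_apply]
  by_cases h : a = b
  · subst h; simp
  · rw [if_neg h, Finset.sum_eq_zero]
    intro c _
    rw [if_neg]
    rintro ⟨rfl, h2⟩
    exact h h2

theorem truncated_boson_qmutator (L : ℕ) (q : ℝ)
    (A : Matrix (Fin (L+1)) (Fin (L+1)) ℂ)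
    (hA : A = ∑ n : Fin L, (Real.sqrt (n+1) : ℂ) •
      Matrix.single n.castSucc n.succ 1)
    (K : Matrix (Fin (L+1)) (Fin (L+1)) ℂ)
    (hK : K = (((q - 1) / (L+1) : ℝ) : ℂ) •
        (∑ n : Fin L, ((n : ℕ) : ℂ) • Matrix.single n.castSucc n.castSucc 1) +
      (((1 + q * L) / (L+1) : ℝ) : ℂ) •
        Matrix.single (Fin.last L) (Fin.last L) 1) :
    A * Aᴴ - (q : ℂ) • (Aᴴ * A) = 1 - ((L+1 : ℕ) : ℂ) • K := by
  have hAH : Aᴴ = ∑ n : Fin L, (Real.sqrt (n+1) : ℂ) •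
      Matrix.single n.succ n.castSucc (1:ℂ) := by
    subst hA
    rw [Matrix.conjTranspose_sum]
    refine Finset.sum_congr rfl fun n _ => ?_
    rw [Matrix.conjTranspose_smul, stdE_conjTranspose]
    simp [Complex.star_def, Complex.conj_ofReal]
  have hsq : ∀ n : Fin L, (Real.sqrt (n+1) : ℂ) * (Real.sqrt (n+1) : ℂ)
      = ((n : ℕ) : ℂ) + 1 := by
    intro n
    rw [← Complex.ofReal_mul, Real.mul_self_sqrt (by positivity)]
    push_cast; ring
  have hAAH : A * Aᴴ = ∑ n : Fin L, (((n : ℕ) : ℂ) + 1) •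
      Matrix.single n.castSucc n.castSucc (1:ℂ) := by
    rw [hAH, hA, Finset.sum_mul_sum]
    refine Finset.sum_congr rfl fun n _ => ?_
    rw [Finset.sum_eq_single n]
    · rw [smul_mul_smul_comm, Matrix.single_mul_single_same, mul_one, hsq]
    · intro m _ hmn
      rw [smul_mul_smul_comm, Matrix.single_mul_single_of_ne (h :=
        (fun h => hmn (Fin.succ_injective L h).symm)), smul_zero]
    · intro h; exact absurd (Finset.mem_univ n) h
  have hAHA : Aᴴ * A = ∑ n : Fin L, (((n : ℕ) : ℂ) + 1) •
      Matrix.single n.succ n.succ (1:ℂ) := by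
    rw [hAH, hA, Finset.sum_mul_sum]
    refine Finset.sum_congr rfl fun n _ => ?_
    rw [Finset.sum_eq_single n]
    · rw [smul_mul_smul_comm, Matrix.single_mul_single_same, mul_one, hsq]
    · intro m _ hmn
      rw [smul_mul_smul_comm, Matrix.single_mul_single_of_ne (h :=
        (fun h => hmn (Fin.castSucc_injective L h).symm)), smul_zero]
    · intro h; exact absurd (Finset.mem_univ n) h
  have hL1 : ((L:ℝ) + 1) ≠ 0 := by positivity
  have hc1 : ((L+1 : ℕ) : ℂ) * (((q - 1) / (L+1) : ℝ) : ℂ) = ((q : ℂ) - 1) := by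
    have : ((L:ℂ)+1) ≠ 0 := Nat.cast_add_one_ne_zero L
    push_cast
    field_simp
  have hc2 : ((L+1 : ℕ) : ℂ) * (((1 + q * L) / (L+1) : ℝ) : ℂ) = 1 + (q : ℂ) * L := by
    have : ((L:ℂ)+1) ≠ 0 := Nat.cast_add_one_ne_zero L
    push_cast
    field_simp
  rw [hAAH, hAHA, hK, smul_add, smul_smul, smul_smul, hc1, hc2]
  -- reindex the succ-sum
  have hsucc : ∑ n : Fin L, (((n : ℕ) : ℂ) + 1) • Matrix.single n.succ n.succ (1:ℂ)
      = ∑ n : Fin L, ((n.castSucc : ℕ) : ℂ) •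
          Matrix.single n.castSucc n.castSucc (1:ℂ)
        + ((L : ℕ) : ℂ) • Matrix.single (Fin.last L) (Fin.last L) (1:ℂ) := by
    have h1 : ∑ i : Fin (L+1), ((i : ℕ) : ℂ) • Matrix.single i i (1:ℂ)
        = ∑ n : Fin L, (((n : ℕ) : ℂ) + 1) • Matrix.single n.succ n.succ (1:ℂ) := by
      rw [Fin.sum_univ_succ]
      simp [Fin.val_succ]
    have h2 : ∑ i : Fin (L+1), ((i : ℕ) : ℂ) • Matrix.single i i (1:ℂ)
        = ∑ n : Fin L, ((n.castSucc : ℕ) : ℂ) •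
            Matrix.single n.castSucc n.castSucc (1:ℂ)
          + ((L : ℕ) : ℂ) • Matrix.single (Fin.last L) (Fin.last L) (1:ℂ) := by
      rw [Fin.sum_univ_castSucc]
      simp
    rw [← h1, h2]
  rw [hsucc]
  have hone : (1 : Matrix (Fin (L+1)) (Fin (L+1)) ℂ)
      = ∑ n : Fin L, Matrix.single n.castSucc n.castSucc (1:ℂ)
        + Matrix.single (Fin.last L) (Fin.last L) (1:ℂ) := by
    rw [one_eq_sum_stdE, Fin.sum_univ_castSucc]
  rw [hone]
  simp only [Fin.coe_castSucc]
  have hsplit : ∑ n : Fin L, (((n : ℕ) : ℂ) + 1) •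
        Matrix.single n.castSucc n.castSucc (1:ℂ)
      = ∑ n : Fin L, ((n : ℕ) : ℂ) • Matrix.single n.castSucc n.castSucc (1:ℂ)
        + ∑ n : Fin L, Matrix.single n.castSucc n.castSucc (1:ℂ) := by
    rw [← Finset.sum_add_distrib]
    exact Finset.sum_congr rfl fun n _ => by module
  rw [hsplit]
  module
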